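/- Let K be a field, let k ≥ 1 and n, m, l ≥ 0 be natural numbers, and let u, v (each indexed 0,…,n), w, x (each indexed 0,…,m), and y, z (each indexed 0,…,l) be families of elements of K. Then the k × (2(n+k)+2(m+k)+2(l+k)) block matrix f = [H'(v) | −H'(u) | H'(x) | −H'(w) | H'(z) | −H'(y)] has rank k if and only if not all of the elements of u, v, w, x, y, z are zero (and f = 0 when they are all zero). -/

import Mathlib

/-- The wide Hankel band matrix `H'(u)`: the `k × (n+k)` matrix with
`H'(u)[i,j] = u (n+k-1-i-j)` when `k-1 ≤ i+j ≤ n+k-1` and `0` otherwise. -/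
def Hw {K : Type*} [Field K] (k n : ℕ) (u : Fin (n + 1) → K) :
    Matrix (Fin k) (Fin (n + k)) K :=
  Matrix.of fun i j =>
    if h : k - 1 ≤ (i : ℕ) + (j : ℕ) ∧ (i : ℕ) + (j : ℕ) ≤ n + k - 1 then
      u ⟨n + k - 1 - (i : ℕ) - (j : ℕ), by omega⟩
    else 0

lemma Hw_zero {K : Type*} [Field K] (k n : ℕ) : Hw k n (0 : Fin (n+1) → K) = 0 := by
  ext i j
  simp only [Hw, Matrix.of_apply, Matrix.zero_apply]
  split <;> simp

lemma Hw_neg {K : Type*} [Field K] (k n : ℕ) (u : Fin (n+1) → K) :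
    Hw k n (-u) = -(Hw k n u) := by
  ext i j
  simp only [Hw, Matrix.of_apply, Matrix.neg_apply]
  split <;> simp

lemma hank_det {K : Type*} [Field K] (k n : ℕ) (hk : 1 ≤ k) (u : Fin (n+1) → K)
    (hu : u ≠ 0) : ∃ c : Fin k → Fin (n + k),
    ((Hw k n u).submatrix id c).det ≠ 0 := by
  classical
  obtain ⟨i0, hi0⟩ := Function.ne_iff.mp hu
  have hex : ∃ d, ∃ h : d < n + 1, u ⟨d, h⟩ ≠ 0 := ⟨i0, i0.isLt, by simpa using hi0⟩
  set d := Nat.find hex with hd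
  obtain ⟨hdn, hud⟩ := Nat.find_spec hex
  have hmin : ∀ e, e < d → ∀ h : e < n + 1, u ⟨e, h⟩ = 0 := by
    intro e he h
    by_contra hne
    exact Nat.find_min hex he ⟨h, hne⟩
  refine ⟨fun i => ⟨n + k - 1 - d - i, by omega⟩, ?_⟩
  set M := (Hw k n u).submatrix id (fun i : Fin k => (⟨n + k - 1 - d - i, by omega⟩ : Fin (n+k))) with hM
  have htri : M.BlockTriangular id := by
    intro i j hij
    have hji : (j : ℕ) < (i : ℕ) := hij
    have hik : (i : ℕ) < k := i.isLt
    simp only [hM, Matrix.submatrix_apply, id_eq, Hw, Matrix.of_apply]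
    split
    · next hcond =>
      apply hmin
      omega
    · rfl
  have hdiag : ∀ i : Fin k, M i i = u ⟨d, hdn⟩ := by
    intro i
    have hik : (i : ℕ) < k := i.isLt
    simp only [hM, Matrix.submatrix_apply, id_eq, Hw, Matrix.of_apply]
    rw [dif_pos (by omega)]
    exact congrArg u (Fin.ext (by simp only [Fin.val_mk]; omega))
  rw [Matrix.det_of_upperTriangular htri]
  rw [Finset.prod_congr rfl (fun i _ => hdiag i), Finset.prod_const]
  exact pow_ne_zero _ hud

lemma rank_eq_of_det_submatrix {K : Type*} [Field K] {k : ℕ} {N : Type*} [Fintype N]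
    [DecidableEq N] (F : Matrix (Fin k) N K) (c : Fin k → N)
    (h : (F.submatrix id c).det ≠ 0) : F.rank = k := by
  refine le_antisymm (F.rank_le_card_height.trans (by simp)) ?_
  have h1 : (F.submatrix id c).rank = k := by
    rw [Matrix.rank_of_isUnit _ ((Matrix.isUnit_iff_isUnit_det _).mpr
      (isUnit_iff_ne_zero.mpr h))]
    simp
  have h2 : F.submatrix id c = F * (1 : Matrix N N K).submatrix (Equiv.refl N) c := by
    rw [Matrix.mul_submatrix_one]
    rfl
  calc (k : ℕ) = (F.submatrix id c).rank := h1.symm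
    _ ≤ F.rank := by rw [h2]; exact Matrix.rank_mul_le_left _ _

lemma main_helper {K : Type*} [Field K] {k n : ℕ} {N : Type*} [Fintype N] [DecidableEq N]
    (hk : 1 ≤ k) (F : Matrix (Fin k) N K) (u : Fin (n+1) → K) (hu : u ≠ 0)
    (e : Fin (n + k) → N) (hF : ∀ i j, F i (e j) = Hw k n u i j) : F.rank = k := by
  obtain ⟨c, hc⟩ := hank_det k n hk u hu
  apply rank_eq_of_det_submatrix F (e ∘ c)
  have : F.submatrix id (e ∘ c) = (Hw k n u).submatrix id c := by
    ext i j
    simp [hF]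
  rw [this]
  exact hc
lemma big_zero {K : Type*} [Field K] (k n m l : ℕ) :
    Matrix.fromCols (Matrix.fromCols (Hw k n (0 : Fin (n+1) → K)) (-(Hw k n (0 : Fin (n+1) → K))))
      (Matrix.fromCols (Matrix.fromCols (Hw k m (0 : Fin (m+1) → K)) (-(Hw k m (0 : Fin (m+1) → K))))
        (Matrix.fromCols (Hw k l (0 : Fin (l+1) → K)) (-(Hw k l (0 : Fin (l+1) → K))))) = 0 := by
  rw [Hw_zero, Hw_zero, Hw_zero]
  ext i j
  rcases j with (j | j) | ((j | j) | (j | j)) <;>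
    simp [Matrix.fromCols_apply_inl, Matrix.fromCols_apply_inr]

/-- The block matrix `f = [H'(v) | -H'(u) | H'(x) | -H'(w) | H'(z) | -H'(y)]`
has rank `k` if and only if not all of `u, v, w, x, y, z` vanish; and `f = 0`
when they all vanish. -/
theorem stmt8 {K : Type*} [Field K] (k n m l : ℕ) (hk : 1 ≤ k)
    (u v : Fin (n + 1) → K) (w x : Fin (m + 1) → K) (y z : Fin (l + 1) → K) :
    ((Matrix.fromCols (Matrix.fromCols (Hw k n v) (-(Hw k n u)))
          (Matrix.fromCols (Matrix.fromCols (Hw k m x) (-(Hw k m w)))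
            (Matrix.fromCols (Hw k l z) (-(Hw k l y))))).rank = k ↔
        ¬(u = 0 ∧ v = 0 ∧ w = 0 ∧ x = 0 ∧ y = 0 ∧ z = 0)) ∧
      (u = 0 ∧ v = 0 ∧ w = 0 ∧ x = 0 ∧ y = 0 ∧ z = 0 →
        Matrix.fromCols (Matrix.fromCols (Hw k n v) (-(Hw k n u)))
          (Matrix.fromCols (Matrix.fromCols (Hw k m x) (-(Hw k m w)))
            (Matrix.fromCols (Hw k l z) (-(Hw k l y)))) = 0) := by
  have hzero : (u = 0 ∧ v = 0 ∧ w = 0 ∧ x = 0 ∧ y = 0 ∧ z = 0) →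
      Matrix.fromCols (Matrix.fromCols (Hw k n v) (-(Hw k n u)))
        (Matrix.fromCols (Matrix.fromCols (Hw k m x) (-(Hw k m w)))
          (Matrix.fromCols (Hw k l z) (-(Hw k l y)))) = 0 := by
    rintro ⟨hu, hv, hw, hx, hy, hz⟩
    subst hu hv hw hx hy hz
    exact big_zero k n m l
  refine ⟨⟨?_, ?_⟩, hzero⟩
  · intro hr hall
    rw [hzero hall, Matrix.rank_zero] at hr
    omega
  · intro hall
    by_cases hv0 : v = 0
    · by_cases hu0 : u = 0
      · by_cases hx0 : x = 0
        · by_cases hw0 : w = 0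
          · by_cases hz0 : z = 0
            · by_cases hy0 : y = 0
              · exact absurd ⟨hu0, hv0, hw0, hx0, hy0, hz0⟩ hall
              · exact main_helper hk _ (-y) (neg_ne_zero.mpr hy0)
                  (fun j => Sum.inr (Sum.inr (Sum.inr j))) (fun i j => by
                    rw [Hw_neg]
                    simp [Matrix.fromCols_apply_inl, Matrix.fromCols_apply_inr])
            · exact main_helper hk _ z hz0
                (fun j => Sum.inr (Sum.inr (Sum.inl j))) (fun i j => by
                  simp [Matrix.fromCols_apply_inl, Matrix.fromCols_apply_inr])
          · exact main_helper hk _ (-w) (neg_ne_zero.mpr hw0)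
              (fun j => Sum.inr (Sum.inl (Sum.inr j))) (fun i j => by
                rw [Hw_neg]
                simp [Matrix.fromCols_apply_inl, Matrix.fromCols_apply_inr])
        · exact main_helper hk _ x hx0
            (fun j => Sum.inr (Sum.inl (Sum.inl j))) (fun i j => by
              simp [Matrix.fromCols_apply_inl, Matrix.fromCols_apply_inr])
      · exact main_helper hk _ (-u) (neg_ne_zero.mpr hu0)
          (fun j => Sum.inl (Sum.inr j)) (fun i j => by
            rw [Hw_neg]
            simp [Matrix.fromCols_apply_inl, Matrix.fromCols_apply_inr])
    · exact main_helper hk _ v hv0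
        (fun j => Sum.inl (Sum.inl j)) (fun i j => by
          simp [Matrix.fromCols_apply_inl, Matrix.fromCols_apply_inr])
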